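/- arXiv:1806.00672 — 2 statements merged into one kernel-verified Lean document; each statement's English description precedes it below -/
import Mathlib

section
/- The natural partition cost function c_S vanishes on the diagonal and satisfies the triangle inequality: c_S(P, P) = 0 and c_S(P, R) ≤ c_S(P, Q) + c_S(Q, R) for all partitions P, Q, R of S with at most l blocks, hence c_S is a pseudometric on partitions; moreover c_S(P, Q) = 0 implies P = Q. -/
/-- Two labelings inducing the same partition differ by a permutation of labels. -/
lemma exists_perm_of_same_partition {S L : Type*} [Finite S] (ψ ψ' : S → L)
    (h : ∀ x y : S, ψ x = ψ y ↔ ψ' x = ψ' y) : ∃ π : L ≃ L, ∀ x, π (ψ' x) = ψ x := by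
  classical
  set s : Set L := Set.range ψ' with hs
  have hrep : ∀ a : s, ψ' a.2.choose = (a : L) := fun a => a.2.choose_spec
  let f : s → L := fun a => ψ a.2.choose
  have hinj : Function.Injective f := by
    intro a b hab
    have : ψ' a.2.choose = ψ' b.2.choose := (h _ _).mp hab
    apply Subtype.ext
    rw [← hrep a, ← hrep b, this]
  have hf : ∀ x : S, ∀ hx : ψ' x ∈ s, f ⟨ψ' x, hx⟩ = ψ x := by
    intro x hx
    have : ψ' (⟨ψ' x, hx⟩ : s).2.choose = ψ' x := hrep ⟨ψ' x, hx⟩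
    exact (h _ _).mpr this
  have hsfin : s.Finite := Set.finite_range ψ'
  have key : ∃ g : L ≃ L, ∀ x : s, g x = f x := by
    cases finite_or_infinite L with
    | inl hfin =>
      exact Cardinal.extend_function_finite ⟨f, hinj⟩ ⟨Equiv.refl L⟩
    | inr hinf =>
      refine Cardinal.extend_function_of_lt ⟨f, hinj⟩ ?_ ⟨Equiv.refl L⟩
      calc (Cardinal.mk s) < Cardinal.aleph0 := hsfin.lt_aleph0
        _ ≤ Cardinal.mk L := Cardinal.aleph0_le_mk L
  obtain ⟨π, hπ⟩ := key
  refine ⟨π, fun x => ?_⟩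
  have := hπ ⟨ψ' x, ⟨x, rfl⟩⟩
  rw [this, hf x ⟨x, rfl⟩]

/-- The natural partition cost function vanishes on the diagonal and satisfies
the triangle inequality (hence it is a pseudometric on partitions, represented
as setoids on `S` admitting a labeling with labels in `L`); moreover
`c_S(P, Q) = 0` implies `P = Q`. -/
theorem natural_cost_pseudometric {S L : Type*} [Fintype S] [Nonempty S] [DecidableEq L]
    (P Q R : Setoid S)
    (hP : ∃ φ : S → L, ∀ x y : S, φ x = φ y ↔ P.r x y)
    (hQ : ∃ φ : S → L, ∀ x y : S, φ x = φ y ↔ Q.r x y)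
    (hR : ∃ φ : S → L, ∀ x y : S, φ x = φ y ↔ R.r x y)
    (c : Setoid S → Setoid S → ℝ)
    (hc : ∀ P' Q' : Setoid S, c P' Q' = sInf {e : ℝ | ∃ φ ψ : S → L,
        (∀ x y : S, φ x = φ y ↔ P'.r x y) ∧ (∀ x y : S, ψ x = ψ y ↔ Q'.r x y) ∧
        e = ((Finset.univ.filter (fun x => φ x ≠ ψ x)).card : ℝ) / (Fintype.card S : ℝ)}) :
    c P P = 0 ∧ c P R ≤ c P Q + c Q R ∧ (c P Q = 0 → P = Q) := by
  classical
  set n : ℕ := Fintype.card S with hn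
  have hn0 : 0 < n := Fintype.card_pos
  have hnR : (0 : ℝ) < (n : ℝ) := by exact_mod_cast hn0
  set E : Setoid S → Setoid S → Set ℝ := fun P' Q' => {e : ℝ | ∃ φ ψ : S → L,
      (∀ x y : S, φ x = φ y ↔ P'.r x y) ∧ (∀ x y : S, ψ x = ψ y ↔ Q'.r x y) ∧
      e = ((Finset.univ.filter (fun x => φ x ≠ ψ x)).card : ℝ) / (n : ℝ)} with hE
  have hcE : ∀ P' Q', c P' Q' = sInf (E P' Q') := hc
  -- every element of any E is nonnegative
  have hlb : ∀ P' Q' : Setoid S, ∀ e ∈ E P' Q', (0 : ℝ) ≤ e := by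
    rintro P' Q' e ⟨φ, ψ, -, -, rfl⟩
    exact div_nonneg (Nat.cast_nonneg _) (Nat.cast_nonneg _)
  have hbdd : ∀ P' Q' : Setoid S, BddBelow (E P' Q') := fun P' Q' => ⟨0, hlb P' Q'⟩
  -- each E is finite
  have hfin : ∀ P' Q' : Setoid S, (E P' Q').Finite := by
    intro P' Q'
    apply Set.Finite.subset ((Set.finite_Iic n).image (fun k : ℕ => (k : ℝ) / (n : ℝ)))
    rintro e ⟨φ, ψ, -, -, rfl⟩
    exact ⟨_, Finset.card_filter_le _ _, rfl⟩
  obtain ⟨φP, hφP⟩ := id hP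
  -- c P P = 0
  have h1 : c P P = 0 := by
    rw [hcE]
    have hmem : (0 : ℝ) ∈ E P P := by
      refine ⟨φP, φP, hφP, hφP, ?_⟩
      simp
    exact le_antisymm (by simpa using csInf_le (hbdd P P) hmem)
      (le_csInf ⟨0, hmem⟩ (hlb P P))
  -- infima are attained
  have hne : ∀ (P' Q' : Setoid S), (∃ φ : S → L, ∀ x y : S, φ x = φ y ↔ P'.r x y) →
      (∃ φ : S → L, ∀ x y : S, φ x = φ y ↔ Q'.r x y) → (E P' Q').Nonempty := by
    rintro P' Q' ⟨φ, hφ⟩ ⟨ψ, hψ⟩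
    exact ⟨_, φ, ψ, hφ, hψ, rfl⟩
  have hattain : ∀ (P' Q' : Setoid S), (E P' Q').Nonempty → c P' Q' ∈ E P' Q' := by
    intro P' Q' hn'
    rw [hcE]
    exact hn'.csInf_mem (hfin P' Q')
  -- triangle inequality
  have h2 : c P R ≤ c P Q + c Q R := by
    obtain ⟨φ, ψ, hφ, hψ, hPQ⟩ := hattain P Q (hne P Q hP hQ)
    obtain ⟨ψ', χ, hψ', hχ, hQR⟩ := hattain Q R (hne Q R hQ hR)
    obtain ⟨π, hπ⟩ := exists_perm_of_same_partition ψ ψ'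
      (fun x y => (hψ x y).trans (hψ' x y).symm)
    set χ' : S → L := fun x => π (χ x) with hχ'
    have hχ'R : ∀ x y : S, χ' x = χ' y ↔ R.r x y := by
      intro x y
      rw [hχ', ← hχ x y]
      exact π.injective.eq_iff
    have hmem : ((Finset.univ.filter (fun x => φ x ≠ χ' x)).card : ℝ) / (n : ℝ) ∈ E P R :=
      ⟨φ, χ', hφ, hχ'R, rfl⟩
    have hle : c P R ≤ ((Finset.univ.filter (fun x => φ x ≠ χ' x)).card : ℝ) / (n : ℝ) := by
      rw [hcE]; exact csInf_le (hbdd P R) hmem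
    refine hle.trans ?_
    rw [hPQ, hQR, ← add_div, div_le_div_iff_of_pos_right hnR]
    have hsub : (Finset.univ.filter (fun x => φ x ≠ χ' x)) ⊆
        (Finset.univ.filter (fun x => φ x ≠ ψ x)) ∪
        (Finset.univ.filter (fun x => ψ' x ≠ χ x)) := by
      intro x hx
      simp only [Finset.mem_filter, Finset.mem_union, Finset.mem_univ, true_and] at hx ⊢
      by_contra hcon
      push_neg at hcon
      obtain ⟨h1', h2'⟩ := hcon
      apply hx
      rw [h1', ← hπ x, h2']
    calc ((Finset.univ.filter (fun x => φ x ≠ χ' x)).card : ℝ)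
        ≤ (((Finset.univ.filter (fun x => φ x ≠ ψ x)) ∪
            (Finset.univ.filter (fun x => ψ' x ≠ χ x))).card : ℝ) := by
          exact_mod_cast Finset.card_le_card hsub
      _ ≤ ((Finset.univ.filter (fun x => φ x ≠ ψ x)).card : ℝ) +
            ((Finset.univ.filter (fun x => ψ' x ≠ χ x)).card : ℝ) := by
          exact_mod_cast Finset.card_union_le _ _
  -- c P Q = 0 → P = Q
  have h3 : c P Q = 0 → P = Q := by
    intro h0
    obtain ⟨φ, ψ, hφ, hψ, hval⟩ := hattain P Q (hne P Q hP hQ)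
    rw [h0] at hval
    have hcard : (Finset.univ.filter (fun x => φ x ≠ ψ x)).card = 0 := by
      have := hval.symm
      rw [div_eq_zero_iff] at this
      rcases this with h | h
      · exact_mod_cast h
      · exact absurd h (ne_of_gt hnR)
    have heq : ∀ x : S, φ x = ψ x := by
      intro x
      by_contra hx
      have : x ∈ Finset.univ.filter (fun x => φ x ≠ ψ x) := by
        simp [hx]
      rw [Finset.card_eq_zero.mp hcard] at this
      exact absurd this (Finset.notMem_empty x)
    apply Setoid.ext
    intro x y
    rw [← hφ x y, ← hψ x y, heq x, heq y]
  exact ⟨h1, h2, h3⟩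
end

section
/- Let r₁,…,r_N be independent nonnegative random variables in m groups of sizes N₁,…,N_m, with group-i variables i.i.d. having finite (k+2)-th moments. For granulometric moments of the union of scaled disjoint grains I = ∪_i ∪_j (r_{ij} A_i + x_{ij}) with unit-area convex primitives, the k-th pattern-spectrum moment satisfies μ^{(k)}(I, B) = (Σ_i Σ_j μ^{(k)}(A_i, B) r_{ij}^{k+2}) / (Σ_i Σ_j r_{ij}^{2}), i.e., μ^{(k)}(I,B) = u/v with u, v as in (34)–(35). -/
open MeasureTheory Set
open scoped Pointwise

/-- The morphological opening `I ∘ B = ⋃ {B + x : B + x ⊆ I}`. -/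
def mopening (I B : Set (ℝ × ℝ)) : Set (ℝ × ℝ) :=
  ⋃ x ∈ {x : ℝ × ℝ | (fun b => x + b) '' B ⊆ I}, (fun b => x + b) '' B


lemma mopening_subset (I B : Set (ℝ × ℝ)) : mopening I B ⊆ I := by
  intro y hy
  simp only [mopening, mem_iUnion] at hy
  obtain ⟨x, hx, hy⟩ := hy
  exact hx hy

lemma mopening_mono {I J : Set (ℝ × ℝ)} (h : I ⊆ J) (B : Set (ℝ × ℝ)) :
    mopening I B ⊆ mopening J B := by
  intro y hy
  simp only [mopening, mem_iUnion] at hy ⊢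
  obtain ⟨x, hx, hy⟩ := hy
  exact ⟨x, hx.trans h, hy⟩

lemma mem_mopening_of_subset {I B : Set (ℝ × ℝ)} {x y : ℝ × ℝ}
    (hsub : (fun b => x + b) '' B ⊆ I) (hy : y ∈ (fun b => x + b) '' B) :
    y ∈ mopening I B := by
  simp only [mopening, mem_iUnion]
  exact ⟨x, hsub, hy⟩

lemma mopening_translate (I B : Set (ℝ × ℝ)) (v : ℝ × ℝ) :
    mopening ((fun b => v + b) '' I) B = (fun b => v + b) '' mopening I B := by
  ext y
  simp only [mopening, mem_iUnion, mem_image]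
  constructor
  · rintro ⟨x, hx, b, hb, rfl⟩
    refine ⟨x - v + b, ⟨x - v, ?_, b, hb, rfl⟩, by abel⟩
    intro z hz
    obtain ⟨c, hc, rfl⟩ := hz
    have : v + (x - v + c) ∈ (fun b => v + b) '' I := hx ⟨c, hc, by abel⟩
    obtain ⟨w, hw, hvw⟩ := this
    have hvw' : v + w = v + (x - v + c) := hvw
    have hw' : w = x - v + c := add_left_cancel hvw'
    show x - v + c ∈ I
    exact hw' ▸ hw
  · rintro ⟨z, ⟨x, hx, b, hb, rfl⟩, rfl⟩
    refine ⟨v + x, ?_, b, hb, by abel⟩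
    intro w hw
    obtain ⟨c, hc, rfl⟩ := hw
    exact ⟨x + c, hx ⟨c, hc, rfl⟩, by abel⟩

lemma mopening_smul {I B : Set (ℝ × ℝ)} {r : ℝ} (hr : 0 < r) :
    mopening (r • I) (r • B) = r • mopening I B := by
  ext y
  have hr' : r ≠ 0 := hr.ne'
  simp only [mopening, mem_iUnion, mem_smul_set]
  constructor
  · rintro ⟨x, hx, b, hb, rfl⟩
    obtain ⟨b0, hb0, rfl⟩ := hb
    refine ⟨r⁻¹ • x + b0, ⟨r⁻¹ • x, ?_, b0, hb0, rfl⟩, by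
      simp [smul_add, smul_smul, mul_inv_cancel₀ hr']⟩
    intro z hz
    obtain ⟨c, hc, rfl⟩ := hz
    have : x + r • c ∈ r • I := hx ⟨r • c, ⟨c, hc, rfl⟩, rfl⟩
    obtain ⟨w, hw, hw2⟩ := this
    have : w = r⁻¹ • x + c := by
      have := congrArg (fun z => r⁻¹ • z) hw2
      simpa [smul_add, smul_smul, inv_mul_cancel₀ hr'] using this
    show r⁻¹ • x + c ∈ I
    exact this ▸ hw
  · rintro ⟨z, ⟨x, hx, b, hb, rfl⟩, rfl⟩
    refine ⟨r • x, ?_, r • b, ⟨b, hb, rfl⟩, by simp [smul_add]⟩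
    intro w hw
    obtain ⟨c, hc, rfl⟩ := hw
    obtain ⟨c0, hc0, rfl⟩ := hc
    exact ⟨x + c0, hx ⟨c0, hc0, rfl⟩, by simp [smul_add]⟩

lemma mopening_eq_image (I C : Set (ℝ × ℝ)) :
    mopening I C = (fun p : (ℝ × ℝ) × (ℝ × ℝ) => p.1 + p.2) ''
      ({x : ℝ × ℝ | (fun b => x + b) '' C ⊆ I} ×ˢ C) := by
  ext y
  simp only [mopening, mem_iUnion, mem_image, mem_prod, mem_setOf_eq]
  constructor
  · rintro ⟨x, hx, c, hc, rfl⟩; exact ⟨(x, c), ⟨hx, hc⟩, rfl⟩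
  · rintro ⟨p, ⟨hx, hc⟩, rfl⟩; exact ⟨p.1, hx, p.2, hc, rfl⟩

lemma isCompact_mopening {I C : Set (ℝ × ℝ)} (hI : IsCompact I) (hC : IsCompact C)
    (hCne : C.Nonempty) : IsCompact (mopening I C) := by
  obtain ⟨c0, hc0⟩ := hCne
  set E := {x : ℝ × ℝ | (fun b => x + b) '' C ⊆ I} with hE
  have hEclosed : IsClosed E := by
    have : E = ⋂ c ∈ C, (fun x => x + c) ⁻¹' I := by
      ext x
      simp only [hE, mem_setOf_eq, mem_iInter, mem_preimage, image_subset_iff]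
      rfl
    rw [this]
    exact isClosed_biInter fun c _ =>
      (hI.isClosed).preimage (continuous_id.add continuous_const)
  have hK : IsCompact ((fun y : ℝ × ℝ => y - c0) '' I) :=
    hI.image (continuous_id.sub continuous_const)
  have hEsub : E ⊆ (fun y : ℝ × ℝ => y - c0) '' I := by
    intro x hx
    exact ⟨x + c0, hx ⟨c0, hc0, rfl⟩, add_sub_cancel_right x c0⟩
  have hEcpt : IsCompact E := hK.of_isClosed_subset hEclosed hEsub
  rw [mopening_eq_image]
  exact (hEcpt.prod hC).image (continuous_fst.add continuous_snd)

lemma mopening_smul_subset_of_le {I B : Set (ℝ × ℝ)} (hBcvx : Convex ℝ B)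
    {t1 t2 : ℝ} (h1 : 0 ≤ t1) (h12 : t1 ≤ t2) :
    mopening I (t2 • B) ⊆ mopening I (t1 • B) := by
  rcases eq_or_lt_of_le h12 with rfl | hlt
  · exact subset_rfl
  have hsum : t2 • B = t1 • B + (t2 - t1) • B := by
    have := hBcvx.add_smul h1 (by linarith : (0:ℝ) ≤ t2 - t1)
    rwa [show t1 + (t2 - t1) = t2 by ring] at this
  intro y hy
  simp only [mopening, mem_iUnion] at hy ⊢
  obtain ⟨x, hx, b2, hb2, rfl⟩ := hy
  rw [hsum] at hb2
  obtain ⟨b1, hb1, c, hc, rfl⟩ := hb2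
  refine ⟨x + c, ?_, b1, hb1, by abel⟩
  rintro _ ⟨b, hb, rfl⟩
  have : b + c ∈ t2 • B := by
    rw [hsum]; exact ⟨b, hb, c, hc, rfl⟩
  have h' := hx ⟨b + c, this, rfl⟩
  show x + c + b ∈ I
  rw [show x + c + b = x + (b + c) by abel]
  exact h'

lemma exists_mopening_smul_empty {I B : Set (ℝ × ℝ)} (hI : IsCompact I)
    (hBnt : B.Nontrivial) : ∃ T : ℝ, 0 < T ∧ ∀ t : ℝ, T ≤ t → mopening I (t • B) = ∅ := by
  obtain ⟨b1, hb1, b2, hb2, hne⟩ := hBnt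
  obtain ⟨R, hR0, hR⟩ := hI.isBounded.subset_closedBall_lt 0 0
  have hd : 0 < ‖b1 - b2‖ := by
    simpa [sub_eq_zero] using hne
  refine ⟨2 * R / ‖b1 - b2‖ + 1, by positivity, fun t ht => ?_⟩
  by_contra hne'
  obtain ⟨y, hy⟩ := nonempty_iff_ne_empty.2 hne'
  simp only [mopening, mem_iUnion] at hy
  obtain ⟨x, hx, -⟩ := hy
  have h1 : x + t • b1 ∈ I := hx ⟨t • b1, ⟨b1, hb1, rfl⟩, rfl⟩
  have h2 : x + t • b2 ∈ I := hx ⟨t • b2, ⟨b2, hb2, rfl⟩, rfl⟩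
  have hdist : ‖(x + t • b1) - (x + t • b2)‖ ≤ 2 * R := by
    calc ‖(x + t • b1) - (x + t • b2)‖
        ≤ ‖x + t • b1‖ + ‖x + t • b2‖ := norm_sub_le _ _
      _ ≤ R + R := by
          have e1 := hR h1; have e2 := hR h2
          simp only [Metric.mem_closedBall, dist_zero_right] at e1 e2
          linarith
      _ = 2 * R := by ring
  have ht0 : 0 < t := lt_of_lt_of_le (by positivity) ht
  have : ‖(x + t • b1) - (x + t • b2)‖ = t * ‖b1 - b2‖ := by
    rw [show (x + t • b1) - (x + t • b2) = t • (b1 - b2) by module]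
    rw [norm_smul, Real.norm_eq_abs, abs_of_pos ht0]
  rw [this] at hdist
  have : t ≤ 2 * R / ‖b1 - b2‖ := (le_div_iff₀ hd).2 (by linarith)
  linarith

lemma mopening_mono' {I J : Set (ℝ × ℝ)} (h : I ⊆ J) (B : Set (ℝ × ℝ)) :
    mopening I B ⊆ mopening J B := by
  intro y hy
  simp only [mopening, mem_iUnion] at hy ⊢
  obtain ⟨x, hx, hy⟩ := hy
  exact ⟨x, hx.trans h, hy⟩

lemma mopening_iUnion {ι : Type*} [Fintype ι] {G : ι → Set (ℝ × ℝ)}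
    (hGcpt : ∀ i, IsCompact (G i)) (hGdisj : Pairwise (Function.onFun Disjoint G))
    {C : Set (ℝ × ℝ)} (hCcvx : Convex ℝ C) (hCne : C.Nonempty) :
    mopening (⋃ i, G i) C = ⋃ i, mopening (G i) C := by
  apply Subset.antisymm
  · intro y hy
    simp only [mopening, mem_iUnion] at hy
    obtain ⟨x, hx, hyim⟩ := hy
    set S := (fun b => x + b) '' C with hS
    have hSpc : IsPreconnected S := ((hCcvx.translate x).isPreconnected)
    obtain ⟨c0, hc0⟩ := hCne
    have hs0 : x + c0 ∈ S := ⟨c0, hc0, rfl⟩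
    obtain ⟨p, hp⟩ : ∃ p, x + c0 ∈ G p := mem_iUnion.1 (hx hs0)
    set R := ⋃ q : {q : ι // q ≠ p}, G q.1 with hR
    have hRcpt : IsCompact R := isCompact_iUnion fun q => hGcpt q.1
    have hdisjPR : Disjoint (G p) R := by
      rw [hR, disjoint_iUnion_right]
      exact fun q => (hGdisj (Ne.symm q.2))
    obtain ⟨U1, V1, hU1, hV1, hPU, hRV, hUV⟩ :=
      SeparatedNhds.of_isCompact_isCompact (hGcpt p) hRcpt hdisjPR
    have hScover : S ⊆ G p ∪ R := by
      intro z hz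
      obtain ⟨q, hq⟩ := mem_iUnion.1 (hx hz)
      by_cases hqp : q = p
      · exact Or.inl (hqp ▸ hq)
      · exact Or.inr (mem_iUnion.2 ⟨⟨q, hqp⟩, hq⟩)
    have hSU1 : S ⊆ U1 :=
      hSpc.subset_left_of_subset_union hU1 hV1 hUV
        (hScover.trans (union_subset_union hPU hRV)) ⟨x + c0, hs0, hPU hp⟩
    have hSGp : S ⊆ G p := by
      intro z hz
      rcases hScover hz with h | h
      · exact h
      · exact absurd (hUV.ne_of_mem (hSU1 hz) (hRV h)) (fun hne => hne rfl)
    refine mem_iUnion.2 ⟨p, ?_⟩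
    simp only [mopening, mem_iUnion]
    exact ⟨x, hSGp, hyim⟩
  · exact iUnion_subset fun i => mopening_mono' (subset_iUnion G i) C
open MeasureTheory Set
open scoped Pointwise

lemma integral_scale_aux (f : ℝ → ℝ) {r : ℝ} (hr : 0 < r) (n : ℕ) :
    ∫ t in Set.Ioi (0:ℝ), t ^ n * f (t / r) = r ^ (n + 1) * ∫ s in Set.Ioi (0:ℝ), s ^ n * f s := by
  have key := integral_comp_mul_left_Ioi (fun x => x ^ n * f x) 0 (inv_pos.2 hr)
  simp only [mul_zero, smul_eq_mul, inv_inv] at key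
  have hpt : ∀ t : ℝ, t ^ n * f (t / r) = r ^ n * ((r⁻¹ * t) ^ n * f (r⁻¹ * t)) := by
    intro t
    rw [div_eq_inv_mul, mul_pow, ← mul_assoc, ← mul_assoc, ← mul_pow,
      mul_inv_cancel₀ hr.ne', one_pow, one_mul]
  calc ∫ t in Set.Ioi (0:ℝ), t ^ n * f (t / r)
      = ∫ t in Set.Ioi (0:ℝ), r ^ n * ((r⁻¹ * t) ^ n * f (r⁻¹ * t)) := by
        simp only [hpt]
    _ = r ^ n * ∫ t in Set.Ioi (0:ℝ), (r⁻¹ * t) ^ n * f (r⁻¹ * t) := by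
        rw [MeasureTheory.integral_const_mul]
    _ = r ^ n * (r * ∫ s in Set.Ioi (0:ℝ), s ^ n * f s) := by rw [key]
    _ = r ^ (n + 1) * ∫ s in Set.Ioi (0:ℝ), s ^ n * f s := by ring
lemma measure_mopening_ne_top {A : Set (ℝ × ℝ)} (hA : IsCompact A) (C : Set (ℝ × ℝ)) :
    volume (mopening A C) ≠ ⊤ :=
  ((measure_mono (mopening_subset A C)).trans_lt hA.measure_lt_top).ne

lemma integrableOn_pow_mul_vol_mopening {A B : Set (ℝ × ℝ)} (hA : IsCompact A)
    (hBcvx : Convex ℝ B) (hBnt : B.Nontrivial)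
    {r : ℝ} (hr : 0 < r) (n : ℕ) :
    IntegrableOn (fun t => t ^ n * (volume (mopening A ((t / r) • B))).toReal)
      (Set.Ioi (0:ℝ)) := by
  have hAfin : volume A ≠ ⊤ := hA.measure_lt_top.ne
  set h : ℝ → ℝ := fun s => (volume (mopening A ((max s 0) • B))).toReal with hh
  have hh_anti : Antitone h := by
    intro s1 s2 hs
    exact ENNReal.toReal_mono (measure_mopening_ne_top hA _)
      (measure_mono (mopening_smul_subset_of_le hBcvx (le_max_right s1 0)
        (max_le_max hs le_rfl)))
  have hh_meas : Measurable h := hh_anti.measurable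
  have hh_nonneg : ∀ s, 0 ≤ h s := fun s => ENNReal.toReal_nonneg
  have hh_le : ∀ s, h s ≤ (volume A).toReal := fun s =>
    ENNReal.toReal_mono hAfin (measure_mono (mopening_subset _ _))
  set g : ℝ → ℝ := fun t => t ^ n * h (t / r) with hg
  have hg_meas : Measurable g :=
    (measurable_id.pow_const n).mul (hh_meas.comp (measurable_id.div_const r))
  obtain ⟨T, hT0, hTempty⟩ := exists_mopening_smul_empty hA hBnt
  have hgzero : ∀ t ∈ Set.Ioi (r * T), g t = 0 := by
    intro t ht
    have htr : T < t / r := (lt_div_iff₀ hr).2 (by rw [mul_comm]; exact ht)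
    have htr0 : 0 < t / r := lt_trans hT0 htr
    have : max (t / r) 0 = t / r := max_eq_left htr0.le
    simp only [hg, hh, this, hTempty _ htr.le, measure_empty, ENNReal.toReal_zero, mul_zero]
  have hgmain : IntegrableOn g (Set.Ioi 0) := by
    have hsub : Set.Ioi (0:ℝ) ⊆ Set.Ioc 0 (r * T) ∪ Set.Ioi (r * T) := by
      intro t ht
      rcases le_or_gt t (r * T) with h' | h'
      · exact Or.inl ⟨ht, h'⟩
      · exact Or.inr h'
    refine (IntegrableOn.union ?_ ?_).mono_set hsub
    · refine Measure.integrableOn_of_bounded (M := (r * T) ^ n * (volume A).toReal)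
        measure_Ioc_lt_top.ne hg_meas.aestronglyMeasurable ?_
      rw [ae_restrict_iff' measurableSet_Ioc]
      refine Filter.Eventually.of_forall fun t ht => ?_
      have ht0 : 0 < t := ht.1
      have hb : |g t| = t ^ n * h (t / r) :=
        abs_of_nonneg (mul_nonneg (pow_nonneg ht0.le n) (hh_nonneg _))
      rw [Real.norm_eq_abs, hb]
      exact mul_le_mul (pow_le_pow_left₀ ht0.le ht.2 n) (hh_le _) (hh_nonneg _)
        (pow_nonneg (by positivity) n)
    · exact integrableOn_zero.congr_fun (fun t ht => (hgzero t ht).symm) measurableSet_Ioi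
  refine hgmain.congr_fun (fun t ht => ?_) measurableSet_Ioi
  have ht0 : (0:ℝ) < t := ht
  have : max (t / r) 0 = t / r := max_eq_left (by positivity)
  simp only [hg, hh, this]
lemma vol_image_translate (v : ℝ × ℝ) (S : Set (ℝ × ℝ)) :
    volume ((fun b => v + b) '' S) = volume S := by
  have h : (fun b => v + b) '' S = v +ᵥ S := rfl
  rw [h, measure_vadd]

lemma vol_smul_set (r : ℝ) (S : Set (ℝ × ℝ)) :
    volume (r • S) = ENNReal.ofReal (r ^ 2) * volume S := by
  rw [Measure.addHaar_smul]
  congr 1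
  have h2 : Module.finrank ℝ (ℝ × ℝ) = 2 := by
    simp [Module.finrank_prod]
  rw [h2, abs_pow, sq_abs]

lemma vol_mopening_grain {A B : Set (ℝ × ℝ)} {r t : ℝ} (hr : 0 < r) (v : ℝ × ℝ) :
    volume (mopening ((fun b => v + b) '' (r • A)) (t • B))
      = ENNReal.ofReal (r ^ 2) * volume (mopening A ((t / r) • B)) := by
  have htB : (t : ℝ) • B = r • ((t / r) • B) := by
    rw [smul_smul, mul_div_cancel₀ _ hr.ne']
  rw [mopening_translate, vol_image_translate, htB, mopening_smul hr, vol_smul_set]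

lemma vol_grain {A : Set (ℝ × ℝ)} {r : ℝ} (v : ℝ × ℝ) :
    volume ((fun b => v + b) '' (r • A)) = ENNReal.ofReal (r ^ 2) * volume A := by
  rw [vol_image_translate, vol_smul_set]

/-- The `k`-th pattern-spectrum (granulometric) moment of `I` relative to the
structuring element `B`:
`μ^{(k)}(I,B) = (k / area I) ∫_0^∞ t^{k−1} area(I ∘ tB) dt`
(equivalently `∫ t^k dΦ_I(t)` by integration by parts). -/
noncomputable def gmoment (I B : Set (ℝ × ℝ)) (k : ℕ) : ℝ :=
  ((k : ℝ) / (volume I).toReal) *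
    ∫ t in Set.Ioi (0 : ℝ), t ^ (k - 1) * (volume (mopening I (t • B))).toReal

/-- Granulometric moments of a disjoint union of scaled, translated convex
unit-area primitives combine as an area-weighted ratio:
`μ^{(k)}(I,B) = (∑_{i,j} μ^{(k)}(A_i,B) r_{ij}^{k+2}) / (∑_{i,j} r_{ij}^2)`. -/
theorem gmoment_of_disjoint_union_of_grains
    {m : ℕ} (A : Fin m → Set (ℝ × ℝ)) (B : Set (ℝ × ℝ))
    (hAcpt : ∀ i, IsCompact (A i)) (hAcvx : ∀ i, Convex ℝ (A i))
    (hA1 : ∀ i, volume (A i) = 1)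
    (hBcpt : IsCompact B) (hBcvx : Convex ℝ B) (hBnt : B.Nontrivial)
    (N : Fin m → ℕ) (r : (i : Fin m) → Fin (N i) → ℝ) (hr : ∀ i j, 0 < r i j)
    (xc : (i : Fin m) → Fin (N i) → ℝ × ℝ)
    (grain : (i : Fin m) → Fin (N i) → Set (ℝ × ℝ))
    (hgrain : ∀ i j, grain i j = (fun b => xc i j + b) '' (r i j • A i))
    (hdisj : ∀ (i : Fin m) (j : Fin (N i)) (i' : Fin m) (j' : Fin (N i')),
        (⟨i, j⟩ : Σ i, Fin (N i)) ≠ ⟨i', j'⟩ → Disjoint (grain i j) (grain i' j'))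
    (I : Set (ℝ × ℝ)) (hI : I = ⋃ i, ⋃ j, grain i j)
    (k : ℕ) (hk : 1 ≤ k) :
    gmoment I B k
      = (∑ i, ∑ j, gmoment (A i) B k * r i j ^ (k + 2)) / (∑ i, ∑ j, r i j ^ 2) := by
  classical
  have hBne : B.Nonempty := hBnt.nonempty
  -- grains as a sigma-indexed family
  set G : (Σ i : Fin m, Fin (N i)) → Set (ℝ × ℝ) := fun p => grain p.1 p.2 with hG
  have hGcpt : ∀ p, IsCompact (G p) := by
    intro p
    show IsCompact (grain p.1 p.2)
    rw [hgrain]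
    have hsmul : IsCompact (r p.1 p.2 • A p.1) := by
      rw [← Set.image_smul]
      exact (hAcpt p.1).image (continuous_const_smul _)
    exact hsmul.image (continuous_const.add continuous_id)
  have hGdisjP : Pairwise (Function.onFun Disjoint G) := by
    intro p q hpq
    exact hdisj p.1 p.2 q.1 q.2 (by simpa using hpq)
  have hIU : I = ⋃ p, G p := by
    rw [hI]; exact (iUnion_sigma (γ := fun i : Fin m => Fin (N i)) (fun p => grain p.1 p.2)).symm
  -- volume of I
  have hvolG : ∀ p, volume (G p) = ENNReal.ofReal (r p.1 p.2 ^ 2) := by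
    intro p
    show volume (grain p.1 p.2) = _
    rw [hgrain, vol_grain, hA1, mul_one]
  have hvolI : (volume I).toReal = ∑ p : Σ i, Fin (N i), r p.1 p.2 ^ 2 := by
    rw [hIU, measure_iUnion hGdisjP (fun p => (hGcpt p).measurableSet), tsum_fintype]
    rw [Finset.sum_congr rfl (fun p _ => hvolG p),
      ENNReal.toReal_sum (fun p _ => ENNReal.ofReal_ne_top)]
    exact Finset.sum_congr rfl fun p _ => ENNReal.toReal_ofReal (sq_nonneg _)
  -- pointwise decomposition of the opening's volume
  have hopen_vol : ∀ t : ℝ, 0 < t →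
      (volume (mopening I (t • B))).toReal
        = ∑ p : Σ i, Fin (N i),
            r p.1 p.2 ^ 2 * (volume (mopening (A p.1) ((t / r p.1 p.2) • B))).toReal := by
    intro t ht
    have htBcvx : Convex ℝ (t • B) := hBcvx.smul t
    have htBne : (t • B).Nonempty := hBne.smul_set
    have htBcpt : IsCompact (t • B) := by
      rw [← Set.image_smul]; exact hBcpt.image (continuous_const_smul _)
    rw [hIU, mopening_iUnion hGcpt hGdisjP htBcvx htBne,
      measure_iUnion
        (fun p q hpq => (hGdisjP hpq).mono (mopening_subset _ _) (mopening_subset _ _))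
        (fun p => (isCompact_mopening (hGcpt p) htBcpt htBne).measurableSet),
      tsum_fintype,
      ENNReal.toReal_sum (fun p _ => measure_mopening_ne_top (hGcpt p) _)]
    refine Finset.sum_congr rfl fun p _ => ?_
    show (volume (mopening (grain p.1 p.2) (t • B))).toReal = _
    rw [hgrain, vol_mopening_grain (hr p.1 p.2), ENNReal.toReal_mul,
      ENNReal.toReal_ofReal (sq_nonneg _)]
  -- per-primitive integrals
  set c : Fin m → ℝ := fun i =>
    ∫ t in Set.Ioi (0:ℝ), t ^ (k - 1) * (volume (mopening (A i) (t • B))).toReal with hc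
  have hgA : ∀ i, gmoment (A i) B k = (k : ℝ) * c i := by
    intro i
    unfold gmoment
    rw [hA1 i]
    norm_num
    exact Or.inl rfl
  -- the main integral identity
  have hint : ∫ t in Set.Ioi (0:ℝ), t ^ (k - 1) * (volume (mopening I (t • B))).toReal
      = ∑ p : Σ i, Fin (N i), r p.1 p.2 ^ (k + 2) * c p.1 := by
    rw [setIntegral_congr_fun measurableSet_Ioi (g := fun t => ∑ p : Σ i, Fin (N i),
        r p.1 p.2 ^ 2 * (t ^ (k - 1) *
          (volume (mopening (A p.1) ((t / r p.1 p.2) • B))).toReal))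
      (fun t ht => by
        rw [hopen_vol t ht, Finset.mul_sum]
        exact Finset.sum_congr rfl fun p _ => by ring)]
    rw [integral_finset_sum _ (fun p _ =>
      (integrableOn_pow_mul_vol_mopening (hAcpt p.1) hBcvx hBnt (hr p.1 p.2)
        (k - 1)).const_mul _)]
    refine Finset.sum_congr rfl fun p _ => ?_
    rw [MeasureTheory.integral_const_mul,
      integral_scale_aux (fun s => (volume (mopening (A p.1) (s • B))).toReal)
        (hr p.1 p.2) (k - 1),
      show k - 1 + 1 = k from by omega]
    show r p.1 p.2 ^ 2 * (r p.1 p.2 ^ k * c p.1) = r p.1 p.2 ^ (k + 2) * c p.1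
    ring
  -- assemble
  have hRHS : ∑ i, ∑ j, gmoment (A i) B k * r i j ^ (k + 2)
      = (k : ℝ) * ∑ p : Σ i, Fin (N i), r p.1 p.2 ^ (k + 2) * c p.1 := by
    rw [← Finset.univ_sigma_univ, Finset.sum_sigma, Finset.mul_sum]
    exact Finset.sum_congr rfl fun i _ => by
      rw [Finset.mul_sum]
      exact Finset.sum_congr rfl fun j _ => by rw [hgA]; ring
  have hS2 : ∑ i, ∑ j, r i j ^ 2 = ∑ p : Σ i, Fin (N i), r p.1 p.2 ^ 2 := by
    rw [← Finset.univ_sigma_univ, Finset.sum_sigma]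
  rw [hRHS, hS2]
  unfold gmoment
  rw [hvolI, hint, div_mul_eq_mul_div]
end
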